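/- Let n ≥ 1 and let f_n(x) = ∑_{k=0}^{n} (n!/k!)·x^k. Then the absolute value of the discriminant of f_n is (n!)^n. -/

import Mathlib

open Polynomial NumberField

/-- The monic integer polynomial `n!` times the `n`-th Taylor polynomial of `exp`:
`f_n(x) = ∑_(k=0)^(n) (n!/k!) x^k`. -/
noncomputable def fInt (n : ℕ) : Polynomial ℤ :=
  ∑ k ∈ Finset.range (n + 1), C ((n.factorial / k.factorial : ℕ) : ℤ) * X ^ k

/-- The index `[ℤ_K : ℤ[θ]]` of the order `ℤ[θ]` in the ring of integers of `K`. -/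
noncomputable def subIdx {K : Type*} [Field K] [NumberField K] (θ : 𝓞 K) : ℕ :=
  (Subalgebra.toSubmodule (Algebra.adjoin ℤ ({θ} : Set (𝓞 K)))).toAddSubgroup.index

/-- The discriminant of a polynomial over `ℚ`, via the product of squared differences of
its complex roots (monic convention). -/
noncomputable def polyDisc (f : Polynomial ℚ) : ℂ :=
  let l := ((f.map (algebraMap ℚ ℂ)).roots).toList
  ∏ q ∈ (Finset.range l.length ×ˢ Finset.range l.length).filter (fun q => q.1 < q.2),
    (l.getD q.1 0 - l.getD q.2 0) ^ 2


lemma fInt_coeff (n m : ℕ) :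
    (fInt n).coeff m = if m ≤ n then ((n.factorial / m.factorial : ℕ) : ℤ) else 0 := by
  rw [fInt, finset_sum_coeff]
  simp only [coeff_C_mul, coeff_X_pow, mul_ite, mul_one, mul_zero]
  rw [Finset.sum_ite_eq (Finset.range (n+1)) m]
  simp [Nat.lt_succ_iff]

lemma fInt_coeff_self (n : ℕ) : (fInt n).coeff n = 1 := by
  rw [fInt_coeff, if_pos le_rfl, Nat.div_self n.factorial_pos]; norm_num

lemma fInt_natDegree (n : ℕ) : (fInt n).natDegree = n := by
  apply le_antisymm
  · apply natDegree_le_iff_coeff_eq_zero.mpr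
    intro m hm
    rw [fInt_coeff, if_neg (by omega)]
  · exact le_natDegree_of_ne_zero (by simp [fInt_coeff_self])

lemma fInt_monic (n : ℕ) : (fInt n).Monic := by
  unfold Monic leadingCoeff
  rw [fInt_natDegree, fInt_coeff_self]

lemma fInt_deriv (n : ℕ) : derivative (fInt n) = fInt n - X ^ n := by
  ext m
  rw [coeff_derivative, coeff_sub, fInt_coeff, fInt_coeff, coeff_X_pow]
  by_cases h1 : m + 1 ≤ n
  · rw [if_pos h1, if_pos (by omega), if_neg (by omega), sub_zero]
    have hd : (m+1) ∣ n.factorial / m.factorial := by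
      rw [Nat.dvd_div_iff_mul_dvd (Nat.factorial_dvd_factorial (by omega))]
      have := Nat.factorial_dvd_factorial h1
      rwa [Nat.factorial_succ, mul_comm] at this
    have : n.factorial / (m+1).factorial * (m+1) = n.factorial / m.factorial := by
      rw [Nat.factorial_succ, mul_comm (m+1), ← Nat.div_div_eq_div_mul,
        Nat.div_mul_cancel hd]
    push_cast [← this]
    ring
  · rw [if_neg h1]
    by_cases h2 : m = n
    · subst h2
      rw [if_pos le_rfl, if_pos rfl, Nat.div_self (Nat.factorial_pos _)]
      norm_num
    · rw [if_neg (by omega), if_neg h2]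
      norm_num

lemma prod_map_eq_prod_range {α M : Type*} [CommMonoid M] (L : List α) (d : α) (f : α → M) :
    (L.map f).prod = ∏ i ∈ Finset.range L.length, f (L.getD i d) := by
  conv_lhs => rw [← List.ofFn_get L]
  rw [List.map_ofFn, List.prod_ofFn, ← Fin.prod_univ_eq_prod_range]
  apply Finset.prod_congr rfl
  intro i _
  simp [List.getD_eq_getElem L d i.2]

lemma derivFinsetProdAux {ι R : Type*} [DecidableEq ι] [CommRing R] (s : Finset ι) (f : ι → R[X]) :
    derivative (∏ i ∈ s, f i) = ∑ i ∈ s, (∏ j ∈ s.erase i, f j) * derivative (f i) := by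
  induction s using Finset.induction_on with
  | empty => simp
  | @insert a s ha ih =>
    rw [Finset.prod_insert ha, derivative_mul, ih, Finset.sum_insert ha,
      Finset.erase_insert ha, Finset.mul_sum]
    congr 1
    · exact mul_comm _ _
    · apply Finset.sum_congr rfl
      intro i hi
      rw [Finset.erase_insert_of_ne (by rintro rfl; exact ha hi),
        Finset.prod_insert (fun h => ha (Finset.mem_of_mem_erase h)), mul_assoc]


/-- The absolute value of the discriminant of `f_n` is `(n!)^n`. -/
theorem abs_disc_fInt (n : ℕ) (hn : 0 < n) :
    ‖polyDisc ((fInt n).map (Int.castRingHom ℚ))‖ = (n.factorial : ℝ) ^ n := by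
  have hmap : ((fInt n).map (Int.castRingHom ℚ)).map (algebraMap ℚ ℂ)
      = (fInt n).map (Int.castRingHom ℂ) := by
    rw [Polynomial.map_map]
    congr 1
  set g : Polynomial ℂ := (fInt n).map (Int.castRingHom ℂ) with hgdef
  have hmonic : g.Monic := (fInt_monic n).map _
  have hdeg : g.natDegree = n := by
    rw [hgdef, (fInt_monic n).natDegree_map, fInt_natDegree]
  have hsplits : Splits g := IsAlgClosed.splits g
  have hcard : g.roots.card = n := by
    rw [← hdeg]; exact (splits_iff_card_roots.mp hsplits)
  set l : List ℂ := g.roots.toList with hldef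
  have hlen : l.length = n := by rw [hldef, Multiset.length_toList, hcard]
  set a : ℕ → ℂ := fun i => l.getD i 0 with hadef
  have hprod : g = ∏ i ∈ Finset.range n, (X - C (a i)) := by
    conv_lhs => rw [hsplits.eq_prod_roots_of_monic hmonic]
    rw [← Multiset.coe_toList g.roots, ← hldef, Multiset.map_coe, Multiset.prod_coe,
      prod_map_eq_prod_range l 0 (fun r => X - C r), hlen]
  have hroot : ∀ i ∈ Finset.range n, g.eval (a i) = 0 := by
    intro i hi
    have hmem : a i ∈ g.roots := by
      rw [hadef]
      simp only
      rw [List.getD_eq_getElem l 0 (by rw [hlen]; exact Finset.mem_range.mp hi)]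
      exact Multiset.mem_toList.mp (List.getElem_mem _)
    exact isRoot_of_mem_roots hmem
  have hderiv : derivative g = g - X ^ n := by
    rw [hgdef, derivative_map, fInt_deriv, Polynomial.map_sub, Polynomial.map_pow, map_X]
  have hderiv_prod : ∀ i ∈ Finset.range n,
      ∏ j ∈ (Finset.range n).erase i, (a i - a j) = -(a i) ^ n := by
    intro i hi
    have h1 : (derivative g).eval (a i) = -(a i) ^ n := by
      rw [hderiv]; simp [hroot i hi]
    rw [← h1]
    conv_rhs => rw [hprod]
    rw [derivFinsetProdAux]
    simp only [derivative_sub, derivative_X, derivative_C, sub_zero, mul_one]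
    rw [eval_finset_sum, Finset.sum_eq_single i]
    · rw [eval_prod]
      apply Finset.prod_congr rfl
      intro j _
      simp
    · intro b hb hbi
      rw [eval_prod]
      apply Finset.prod_eq_zero (Finset.mem_erase.mpr ⟨hbi.symm, hi⟩)
      simp
    · intro h; exact absurd hi h
  -- now the closing computation
  have habs : ∀ i j : ℕ, ‖a j - a i‖ = ‖a i - a j‖ := fun i j =>
    norm_sub_rev _ _
  have hpd : polyDisc ((fInt n).map (Int.castRingHom ℚ)) =
      ∏ q ∈ (Finset.range n ×ˢ Finset.range n).filter (fun q => q.1 < q.2),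
        (a q.1 - a q.2) ^ 2 := by
    simp only [polyDisc, hmap, ← hldef, hlen, ← hadef]
    rfl
  set T := (Finset.range n ×ˢ Finset.range n).filter (fun q => q.1 < q.2) with hT
  set T' := (Finset.range n ×ˢ Finset.range n).filter (fun q => q.2 < q.1) with hT'
  have hswap : ∏ q ∈ T', ‖a q.1 - a q.2‖
      = ∏ q ∈ T, ‖a q.1 - a q.2‖ := by
    apply Finset.prod_nbij' (fun q => Prod.swap q) (fun q => Prod.swap q)
    · intro q hq
      simp only [hT, hT', Finset.mem_filter, Finset.mem_product] at hq ⊢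
      exact ⟨⟨hq.1.2, hq.1.1⟩, hq.2⟩
    · intro q hq
      simp only [hT, hT', Finset.mem_filter, Finset.mem_product] at hq ⊢
      exact ⟨⟨hq.1.2, hq.1.1⟩, hq.2⟩
    · intro q _; rfl
    · intro q _; rfl
    · intro q _; exact habs q.2 q.1
  have hsplit : (Finset.range n ×ˢ Finset.range n).filter (fun q => q.1 ≠ q.2) = T ∪ T' := by
    rw [hT, hT', ← Finset.filter_or]
    apply Finset.filter_congr
    intro q _
    simp only [ne_eq, eq_iff_iff]
    omega
  have hdisj : Disjoint T T' := by
    rw [Finset.disjoint_left]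
    intro q hq hq'
    simp only [hT, hT', Finset.mem_filter] at hq hq'
    omega
  have hA : ∏ q ∈ T, (‖a q.1 - a q.2‖) ^ 2
      = ∏ q ∈ (Finset.range n ×ˢ Finset.range n).filter (fun q => q.1 ≠ q.2),
        ‖a q.1 - a q.2‖ := by
    rw [hsplit, Finset.prod_union hdisj, hswap, ← Finset.prod_mul_distrib]
    exact Finset.prod_congr rfl fun q _ => sq _
  have hB : ∏ q ∈ (Finset.range n ×ˢ Finset.range n).filter (fun q => q.1 ≠ q.2),
        ‖a q.1 - a q.2‖
      = ∏ i ∈ Finset.range n, ∏ j ∈ (Finset.range n).erase i, ‖a i - a j‖ := by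
    rw [Finset.prod_filter, Finset.prod_product]
    apply Finset.prod_congr rfl
    intro i _
    rw [← Finset.prod_filter, Finset.filter_ne]
  have hC : ∀ i ∈ Finset.range n,
      ∏ j ∈ (Finset.range n).erase i, ‖a i - a j‖ = ‖a i‖ ^ n := by
    intro i hi
    rw [← norm_prod, hderiv_prod i hi, norm_neg, norm_pow]
  have hD : ∏ i ∈ Finset.range n, ‖a i‖ = (n.factorial : ℝ) := by
    have h0 : g.eval 0 = (n.factorial : ℂ) := by
      rw [hgdef, eval_map, eval₂_at_zero, fInt_coeff]
      simp
    have h1 := congrArg (fun p : Polynomial ℂ => ‖p.eval 0‖) hprod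
    simp only [h0, eval_prod, eval_sub, eval_X, eval_C, zero_sub, norm_prod, norm_neg] at h1
    rw [← h1, Complex.norm_natCast]
  rw [hpd, norm_prod]
  simp only [norm_pow]
  rw [hA, hB, Finset.prod_congr rfl hC, Finset.prod_pow, hD]
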